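/- Let (X, d) be a metric space, V a finite subset of X, k ≥ 1 an integer, and r ≥ 0, and suppose there exists C* ⊆ V with |C*| ≤ k that covers V within radius r. Let V_1, …, V_m be nonempty sets whose union is V, and for each i let C_i be the set of points of a farthest-point greedy sequence of length k on V_i. Let C = C_1 ∪ ⋯ ∪ C_m, and let c_1, …, c_k be a farthest-point greedy sequence of length k on C. Then every point of V is within distance 4r of the set {c_1, …, c_k}. (That is, the two-round MapReduce algorithm that runs Gonzalez's algorithm on each part and then on the union of the resulting centers is a 4-approximation for k-center.) -/

import Mathlib

open Metric

/-- `c : Fin k → X` is a farthest-point greedy sequence of length `k` on the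
finite set `S`: each `c i` lies in `S`, and for `i ≥ 1` (0-indexed), every
point of `S` is no farther from the previously chosen centers
`{c j : j < i}` than `c i` is. -/
def IsGreedySeq {X : Type*} [MetricSpace X] (S : Finset X) (k : ℕ)
    (c : Fin k → X) : Prop :=
  (∀ i, c i ∈ S) ∧
  ∀ i : Fin k, 0 < (i : ℕ) → ∀ s ∈ S,
    infDist s (c '' {j | j < i}) ≤ infDist (c i) (c '' {j | j < i})

/-- Gonzalez's greedy algorithm is a 2-approximation for `k`-center. -/
lemma greedy_two_approx {X : Type*} [MetricSpace X] (S : Finset X) (k : ℕ)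
    (hk : 1 ≤ k) (c : Fin k → X) (hg : IsGreedySeq S k c) (r : ℝ)
    (Cstar : Finset X) (hcard : Cstar.card ≤ k)
    (hcov : ∀ v ∈ S, ∃ cs ∈ Cstar, dist v cs ≤ r) :
    ∀ s ∈ S, ∃ i, dist s (c i) ≤ 2 * r := by
  intro s hs
  haveI : Nonempty (Fin k) := ⟨⟨0, hk⟩⟩
  set δ := infDist s (Set.range c) with hδ
  set p : Fin (k + 1) → X := fun a => if h : (a : ℕ) < k then c ⟨a, h⟩ else s with hp
  have hpS : ∀ a, p a ∈ S := by
    intro a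
    simp only [hp]
    split
    · exact hg.1 _
    · exact hs
  have hdist : ∀ a b : Fin (k + 1), (a : ℕ) < (b : ℕ) → δ ≤ dist (p a) (p b) := by
    intro a b hab
    by_cases hb : (b : ℕ) < k
    · have ha : (a : ℕ) < k := lt_trans hab hb
      have hpa : p a = c ⟨a, ha⟩ := by simp [hp, ha]
      have hpb : p b = c ⟨b, hb⟩ := by simp [hp, hb]
      rw [hpa, hpb, dist_comm]
      have hpos : 0 < ((⟨b, hb⟩ : Fin k) : ℕ) := by show 0 < (b : ℕ); omega
      have h1 := hg.2 ⟨b, hb⟩ hpos s hs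
      have hmem : c ⟨a, ha⟩ ∈ c '' {j | j < (⟨b, hb⟩ : Fin k)} :=
        ⟨⟨a, ha⟩, by simp only [Set.mem_setOf_eq, Fin.lt_def]; exact hab, rfl⟩
      have hsub : c '' {j | j < (⟨b, hb⟩ : Fin k)} ⊆ Set.range c :=
        Set.image_subset_range _ _
      calc δ ≤ infDist s (c '' {j | j < (⟨b, hb⟩ : Fin k)}) :=
              infDist_le_infDist_of_subset hsub ⟨_, hmem⟩
        _ ≤ infDist (c ⟨b, hb⟩) (c '' {j | j < (⟨b, hb⟩ : Fin k)}) := h1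
        _ ≤ dist (c ⟨b, hb⟩) (c ⟨a, ha⟩) := infDist_le_dist_of_mem hmem
    · have ha : (a : ℕ) < k := by omega
      have hpa : p a = c ⟨a, ha⟩ := by simp [hp, ha]
      have hpb : p b = s := by simp [hp, hb]
      rw [hpa, hpb, dist_comm]
      exact infDist_le_dist_of_mem ⟨⟨a, ha⟩, rfl⟩
  choose F hFmem hFdist using fun a : Fin (k + 1) => hcov _ (hpS a)
  have hcard' : Cstar.card < (Finset.univ : Finset (Fin (k + 1))).card := by
    simpa using Nat.lt_succ_of_le hcard
  obtain ⟨a, -, b, -, hne, hFeq⟩ :=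
    Finset.exists_ne_map_eq_of_card_lt_of_maps_to hcard' (fun a _ => hFmem a)
  have hab : δ ≤ dist (p a) (p b) := by
    rcases lt_or_gt_of_ne (fun h : (a : ℕ) = (b : ℕ) => hne (Fin.ext h)) with h | h
    · exact hdist a b h
    · rw [dist_comm]; exact hdist b a h
  have h2r : dist (p a) (p b) ≤ 2 * r := by
    calc dist (p a) (p b) ≤ dist (p a) (F a) + dist (F a) (p b) := dist_triangle _ _ _
      _ ≤ r + r := by
          gcongr
          · exact hFdist a
          · rw [dist_comm, hFeq]; exact hFdist b
      _ = 2 * r := by ring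
  have hδ2 : δ ≤ 2 * r := le_trans hab h2r
  obtain ⟨y, hy, hdy⟩ :=
    ((Set.finite_range c).isCompact).exists_infDist_eq_dist (Set.range_nonempty c) s
  obtain ⟨i, rfl⟩ := hy
  exact ⟨i, by rw [← hdy]; exact hδ2⟩

/-- The two-round MapReduce algorithm that runs Gonzalez's greedy algorithm
on each part `V i` of a decomposition of `V`, collects the resulting centers
into `C`, and then runs Gonzalez's algorithm on `C`, is a 4-approximation
for `k`-center. -/
theorem two_round_mapreduce_four_approx {X : Type*} [MetricSpace X]
    [DecidableEq X] (V : Finset X) (k : ℕ) (hk : 1 ≤ k) (r : ℝ) (hr : 0 ≤ r)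
    (Cstar : Finset X) (hCsub : Cstar ⊆ V) (hCcard : Cstar.card ≤ k)
    (hcov : ∀ v ∈ V, ∃ cs ∈ Cstar, dist v cs ≤ r)
    (m : ℕ) (Vs : Fin m → Finset X) (hVne : ∀ i, (Vs i).Nonempty)
    (hunion : ∀ v, v ∈ V ↔ ∃ i, v ∈ Vs i)
    (cseq : ∀ i : Fin m, Fin k → X)
    (hcseq : ∀ i, IsGreedySeq (Vs i) k (cseq i))
    (C : Finset X)
    (hC : C = Finset.image (fun p : Fin m × Fin k => cseq p.1 p.2) Finset.univ)
    (c : Fin k → X) (hgreedy : IsGreedySeq C k c) :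
    ∀ v ∈ V, ∃ i : Fin k, dist v (c i) ≤ 4 * r := by
  intro v hv
  obtain ⟨i, hvi⟩ := (hunion v).1 hv
  -- Cstar covers Vs i
  have hcovi : ∀ w ∈ Vs i, ∃ cs ∈ Cstar, dist w cs ≤ r := fun w hw =>
    hcov w ((hunion w).2 ⟨i, hw⟩)
  obtain ⟨j, hj⟩ := greedy_two_approx (Vs i) k hk (cseq i) (hcseq i) r Cstar hCcard hcovi v hvi
  -- Cstar covers C
  have hCV : ∀ w ∈ C, w ∈ V := by
    intro w hw
    rw [hC] at hw
    obtain ⟨⟨a, b⟩, -, rfl⟩ := Finset.mem_image.1 hw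
    exact (hunion _).2 ⟨a, (hcseq a).1 b⟩
  have hcovC : ∀ w ∈ C, ∃ cs ∈ Cstar, dist w cs ≤ r := fun w hw => hcov w (hCV w hw)
  have hmemC : cseq i j ∈ C := by
    rw [hC]; exact Finset.mem_image.2 ⟨(i, j), Finset.mem_univ _, rfl⟩
  obtain ⟨l, hl⟩ := greedy_two_approx C k hk c hgreedy r Cstar hCcard hcovC (cseq i j) hmemC
  refine ⟨l, ?_⟩
  calc dist v (c l) ≤ dist v (cseq i j) + dist (cseq i j) (c l) := dist_triangle _ _ _
    _ ≤ 2 * r + 2 * r := add_le_add hj hl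
    _ = 4 * r := by ring
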